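/- For all positive integers m, k, the function Λ_{m,k} is continuous, monotonically increasing, and concave on [0,1]. -/

import Mathlib

open Real Set Filter Topology

/-- The function `Λ_{m,k}` from the paper (extended by `0` to `p ≤ 0`). -/
noncomputable def Lam (m k : ℕ) (p : ℝ) : ℝ :=
  if p ≤ 0 then 0
  else if p ≤ 1 / (m : ℝ) then
    p * ((1 / (k : ℝ)) * Real.log (Real.exp k * (m : ℝ) ^ (k - 1) / p)) ^ ((k : ℝ) / 2)
  else
    p * Real.sqrt (Real.log (Real.exp 1 / p)) *
      Real.log (Real.exp 1 * m) ^ (((k : ℝ) - 1) / 2)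

namespace LamAux

/-- auxiliary: the quantity inside the power on the first branch -/
noncomputable def G (m k : ℕ) (p : ℝ) : ℝ :=
  (1 / (k : ℝ)) * Real.log (Real.exp k * (m : ℝ) ^ (k - 1) / p)

/-- first branch -/
noncomputable def F1 (m k : ℕ) (p : ℝ) : ℝ := p * G m k p ^ ((k : ℝ) / 2)

/-- second branch -/
noncomputable def F2 (m k : ℕ) (p : ℝ) : ℝ :=
  p * Real.sqrt (Real.log (Real.exp 1 / p)) * Real.log (Real.exp 1 * m) ^ (((k : ℝ) - 1) / 2)

/-- derivative of the first branch -/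
noncomputable def D1 (m k : ℕ) (p : ℝ) : ℝ :=
  G m k p ^ ((k : ℝ) / 2) - G m k p ^ ((k : ℝ) / 2 - 1) / 2

/-- derivative of the second branch -/
noncomputable def D2 (m k : ℕ) (p : ℝ) : ℝ :=
  Real.log (Real.exp 1 * m) ^ (((k : ℝ) - 1) / 2) *
    (Real.sqrt (Real.log (Real.exp 1 / p)) - 1 / (2 * Real.sqrt (Real.log (Real.exp 1 / p))))

/-- derivative of `Lam` on `(0,1)` -/
noncomputable def D (m k : ℕ) (p : ℝ) : ℝ :=
  if p ≤ 1 / (m : ℝ) then D1 m k p else D2 m k p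

variable {m k : ℕ} {p x y s t : ℝ}

lemma Lam_eq_F1 (h0 : 0 < p) (h1 : p ≤ 1 / (m : ℝ)) : Lam m k p = F1 m k p := by
  unfold Lam F1 G
  rw [if_neg (not_le.mpr h0), if_pos h1]

lemma Lam_eq_F2 (h1 : 1 / (m : ℝ) < p) (h0 : 0 < p) : Lam m k p = F2 m k p := by
  unfold Lam F2
  rw [if_neg (not_le.mpr h0), if_neg (not_le.mpr h1)]

lemma hM0 (hm : 1 ≤ m) : (0:ℝ) < m := by exact_mod_cast Nat.lt_of_lt_of_le Nat.zero_lt_one hm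

lemma hM1 (hm : 1 ≤ m) : (1:ℝ) ≤ m := by exact_mod_cast hm

lemma hK0 (hk : 1 ≤ k) : (0:ℝ) < k := by exact_mod_cast Nat.lt_of_lt_of_le Nat.zero_lt_one hk

lemma hK1 (hk : 1 ≤ k) : (1:ℝ) ≤ k := by exact_mod_cast hk

lemma L_eq (hm : 1 ≤ m) : Real.log (Real.exp 1 * m) = 1 + Real.log m := by
  rw [Real.log_mul (Real.exp_ne_zero 1) (hM0 hm).ne', Real.log_exp]

lemma one_le_L (hm : 1 ≤ m) : 1 ≤ Real.log (Real.exp 1 * m) := by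
  rw [L_eq hm]
  have := Real.log_nonneg (hM1 hm)
  linarith

lemma G_eq (hm : 1 ≤ m) (hk : 1 ≤ k) (hp : 0 < p) :
    G m k p = 1 + (((k : ℝ) - 1) * Real.log m - Real.log p) / k := by
  unfold G
  have hMpow : (0:ℝ) < (m : ℝ) ^ (k - 1) := pow_pos (hM0 hm) _
  rw [Real.log_div (by positivity) hp.ne', Real.log_mul (Real.exp_ne_zero _) hMpow.ne',
    Real.log_exp, Real.log_pow]
  have hcast : ((k - 1 : ℕ) : ℝ) = (k : ℝ) - 1 := by
    have := Nat.cast_sub hk (R := ℝ); simpa using this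
  rw [hcast]
  field_simp [(hK0 hk).ne']
  ring

lemma G_antitone (hm : 1 ≤ m) (hk : 1 ≤ k) (hx : 0 < x) (hxy : x ≤ y) :
    G m k y ≤ G m k x := by
  have hy : 0 < y := lt_of_lt_of_le hx hxy
  rw [G_eq hm hk hx, G_eq hm hk hy]
  have hlog : Real.log x ≤ Real.log y := Real.log_le_log hx hxy
  have := hK0 hk
  gcongr

lemma L_le_G (hm : 1 ≤ m) (hk : 1 ≤ k) (hp : 0 < p) (hp1 : p ≤ 1 / (m : ℝ)) :
    Real.log (Real.exp 1 * m) ≤ G m k p := by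
  rw [G_eq hm hk hp, L_eq hm]
  have hK := hK0 hk
  have hlog : Real.log p ≤ -Real.log m := by
    rw [← Real.log_inv]
    exact Real.log_le_log hp (by rwa [one_div] at hp1)
  rw [add_le_add_iff_left, le_div_iff₀ hK]
  nlinarith [hlog]

lemma one_le_G (hm : 1 ≤ m) (hk : 1 ≤ k) (hp : 0 < p) (hp1 : p ≤ 1 / (m : ℝ)) :
    1 ≤ G m k p :=
  le_trans (one_le_L hm) (L_le_G hm hk hp hp1)

lemma G_at (hm : 1 ≤ m) (hk : 1 ≤ k) :
    G m k (1 / (m : ℝ)) = Real.log (Real.exp 1 * m) := by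
  have h0 : (0:ℝ) < 1 / m := by positivity
  rw [G_eq hm hk h0, L_eq hm, one_div, Real.log_inv]
  field_simp [(hK0 hk).ne']
  ring

/-- `ψ(t) = t^(K/2) - t^(K/2-1)/2` is nonnegative for `t ≥ 1`. -/
lemma psi_nonneg {K : ℝ} (hK : 1 ≤ K) (ht : 1 ≤ t) :
    0 ≤ t ^ (K / 2) - t ^ (K / 2 - 1) / 2 := by
  have ht0 : (0:ℝ) < t := lt_of_lt_of_le one_pos ht
  have h1 : t ^ (K / 2) = t ^ (K / 2 - 1) * t := by
    rw [← Real.rpow_add_one ht0.ne' (K / 2 - 1)]; norm_num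
  have h2 : (0:ℝ) < t ^ (K / 2 - 1) := Real.rpow_pos_of_pos ht0 _
  rw [h1]
  nlinarith [mul_le_mul_of_nonneg_left ht h2.le]

/-- `ψ` is monotone on `[1, ∞)` (for natural `k ≥ 1`). -/
lemma psi_mono (hk : 1 ≤ k) (hs : 1 ≤ s) (hst : s ≤ t) :
    s ^ ((k : ℝ) / 2) - s ^ ((k : ℝ) / 2 - 1) / 2 ≤
      t ^ ((k : ℝ) / 2) - t ^ ((k : ℝ) / 2 - 1) / 2 := by
  have hs0 : (0:ℝ) < s := lt_of_lt_of_le one_pos hs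
  have ht0 : (0:ℝ) < t := lt_of_lt_of_le hs0 hst
  rcases eq_or_lt_of_le hk with h1 | h2
  · -- k = 1
    have hK : (k : ℝ) = 1 := by rw [← h1]; norm_num
    rw [hK]
    rw [show (1:ℝ)/2 - 1 = -(1/2 : ℝ) by norm_num, Real.rpow_neg hs0.le, Real.rpow_neg ht0.le]
    have hmono : s ^ ((1:ℝ)/2) ≤ t ^ ((1:ℝ)/2) := Real.rpow_le_rpow hs0.le hst (by norm_num)
    have hspos : (0:ℝ) < s ^ ((1:ℝ)/2) := Real.rpow_pos_of_pos hs0 _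
    have hinv : (t ^ ((1:ℝ)/2))⁻¹ ≤ (s ^ ((1:ℝ)/2))⁻¹ := by
      exact inv_anti₀ hspos hmono
    linarith
  · -- k ≥ 2
    have hk2 : (2:ℝ) ≤ k := by exact_mod_cast h2
    have hfact : ∀ x : ℝ, 0 < x →
        x ^ ((k : ℝ) / 2) - x ^ ((k : ℝ) / 2 - 1) / 2 =
          x ^ ((k : ℝ) / 2 - 1) * (x - 1 / 2) := by
      intro x hx
      rw [mul_sub, ← Real.rpow_add_one hx.ne' ((k : ℝ) / 2 - 1)]
      norm_num
      ring
    rw [hfact s hs0, hfact t ht0]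
    have h1 : s ^ ((k : ℝ) / 2 - 1) ≤ t ^ ((k : ℝ) / 2 - 1) :=
      Real.rpow_le_rpow hs0.le hst (by linarith)
    have h2' : s - 1 / 2 ≤ t - 1 / 2 := by linarith
    have h3 : (0:ℝ) ≤ s - 1 / 2 := by linarith
    have h4 : (0:ℝ) ≤ t ^ ((k : ℝ) / 2 - 1) := (Real.rpow_pos_of_pos ht0 _).le
    exact mul_le_mul h1 h2' h3 h4

/-- `χ(t) = √t - 1/(2√t)` is monotone on `[1, ∞)`. -/
lemma chi_mono (hs : 1 ≤ s) (hst : s ≤ t) :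
    Real.sqrt s - 1 / (2 * Real.sqrt s) ≤ Real.sqrt t - 1 / (2 * Real.sqrt t) := by
  have hs0 : (0:ℝ) < s := lt_of_lt_of_le one_pos hs
  have hsq : Real.sqrt s ≤ Real.sqrt t := Real.sqrt_le_sqrt hst
  have hspos : (0:ℝ) < Real.sqrt s := Real.sqrt_pos.2 hs0
  have hinv : 1 / (2 * Real.sqrt t) ≤ 1 / (2 * Real.sqrt s) := by
    apply one_div_le_one_div_of_le (by linarith)
    linarith
  linarith

lemma chi_nonneg (ht : 1 ≤ t) :
    0 ≤ Real.sqrt t - 1 / (2 * Real.sqrt t) := by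
  have h1 : (1:ℝ) ≤ Real.sqrt t := by
    rw [show (1:ℝ) = Real.sqrt 1 from (Real.sqrt_one).symm]
    exact Real.sqrt_le_sqrt ht
  have : 1 / (2 * Real.sqrt t) ≤ 1 / 2 := by
    apply one_div_le_one_div_of_le (by norm_num)
    linarith
  linarith

/-- the junction identity between the two derivative expressions. -/
lemma psi_chi {K L : ℝ} (hL : 0 < L) :
    L ^ ((K - 1) / 2) * (Real.sqrt L - 1 / (2 * Real.sqrt L)) =
      L ^ (K / 2) - L ^ (K / 2 - 1) / 2 := by
  rw [Real.sqrt_eq_rpow]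
  have hb : (0:ℝ) < L ^ ((1:ℝ) / 2) := Real.rpow_pos_of_pos hL _
  have h1 : L ^ ((K - 1) / 2) * L ^ ((1:ℝ) / 2) = L ^ (K / 2) := by
    rw [← Real.rpow_add hL, show (K - 1) / 2 + (1:ℝ) / 2 = K / 2 by ring]
  have h2 : L ^ ((K - 1) / 2) / L ^ ((1:ℝ) / 2) = L ^ (K / 2 - 1) := by
    rw [← Real.rpow_sub hL, show (K - 1) / 2 - (1:ℝ) / 2 = K / 2 - 1 by ring]
  rw [mul_sub, h1, mul_one_div, mul_comm (2:ℝ), ← div_div, h2]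

lemma sqrt_mul_rpow {K L : ℝ} (hL : 0 < L) :
    Real.sqrt L * L ^ ((K - 1) / 2) = L ^ (K / 2) := by
  rw [Real.sqrt_eq_rpow, ← Real.rpow_add hL, show (1:ℝ) / 2 + (K - 1) / 2 = K / 2 by ring]

lemma u_eq (hp : 0 < p) : Real.log (Real.exp 1 / p) = 1 - Real.log p := by
  rw [Real.log_div (Real.exp_ne_zero 1) hp.ne', Real.log_exp]

lemma one_le_u (hp : 0 < p) (hp1 : p ≤ 1) : 1 ≤ Real.log (Real.exp 1 / p) := by
  rw [u_eq hp]
  have := Real.log_nonpos hp.le hp1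
  linarith

lemma u_antitone (hx : 0 < x) (hxy : x ≤ y) :
    Real.log (Real.exp 1 / y) ≤ Real.log (Real.exp 1 / x) := by
  have hy : 0 < y := lt_of_lt_of_le hx hxy
  rw [u_eq hx, u_eq hy]
  have := Real.log_le_log hx hxy
  linarith

lemma u_le_L (hm : 1 ≤ m) (hp : 1 / (m : ℝ) ≤ p) :
    Real.log (Real.exp 1 / p) ≤ Real.log (Real.exp 1 * m) := by
  have hM := hM0 hm
  have hp0 : 0 < p := lt_of_lt_of_le (by positivity) hp
  apply Real.log_le_log (by positivity)
  rw [div_le_iff₀ hp0]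
  have h1 : (1:ℝ) ≤ p * m := by
    rw [div_le_iff₀ hM] at hp
    linarith
  nlinarith [Real.exp_pos 1]

lemma junction_F (hm : 1 ≤ m) (hk : 1 ≤ k) :
    F1 m k (1 / (m : ℝ)) = F2 m k (1 / (m : ℝ)) := by
  have hL : (0:ℝ) < Real.log (Real.exp 1 * m) := lt_of_lt_of_le one_pos (one_le_L hm)
  have hlog : Real.log (Real.exp 1 / (1 / (m:ℝ))) = Real.log (Real.exp 1 * m) := by
    have := (hM0 hm).ne'
    congr 1
    field_simp
  unfold F1 F2
  rw [G_at hm hk, hlog, mul_assoc, sqrt_mul_rpow hL]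

lemma junction_D (hm : 1 ≤ m) (hk : 1 ≤ k) :
    D1 m k (1 / (m : ℝ)) = D2 m k (1 / (m : ℝ)) := by
  have hL : (0:ℝ) < Real.log (Real.exp 1 * m) := lt_of_lt_of_le one_pos (one_le_L hm)
  have hlog : Real.log (Real.exp 1 / (1 / (m:ℝ))) = Real.log (Real.exp 1 * m) := by
    have := (hM0 hm).ne'
    congr 1
    field_simp
  unfold D1 D2
  rw [G_at hm hk, hlog, psi_chi hL]

lemma hasDerivAt_G (hm : 1 ≤ m) (hk : 1 ≤ k) (hp : 0 < p) :
    HasDerivAt (G m k) (-(1 / ((k : ℝ) * p))) p := by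
  have H : HasDerivAt (fun q : ℝ => 1 + (((k : ℝ) - 1) * Real.log m - Real.log q) / k)
      (-(1 / ((k : ℝ) * p))) p := by
    have h1 := (Real.hasDerivAt_log hp.ne').const_sub (((k : ℝ) - 1) * Real.log m)
    have h2 := (h1.div_const (k : ℝ)).const_add 1
    refine h2.congr_deriv ?_
    field_simp
  apply H.congr_of_eventuallyEq
  filter_upwards [Ioi_mem_nhds hp] with q hq
  exact G_eq hm hk hq

lemma hasDerivAt_F1 (hm : 1 ≤ m) (hk : 1 ≤ k) (hp : 0 < p) (hp1 : p ≤ 1 / (m : ℝ)) :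
    HasDerivAt (F1 m k) (D1 m k p) p := by
  have hG : 1 ≤ G m k p := one_le_G hm hk hp hp1
  have hG0 : G m k p ≠ 0 := by linarith
  have h1 : HasDerivAt (fun q => G m k q ^ ((k : ℝ) / 2))
      (-(1 / ((k : ℝ) * p)) * ((k : ℝ) / 2) * G m k p ^ ((k : ℝ) / 2 - 1)) p :=
    (hasDerivAt_G hm hk hp).rpow_const (Or.inl hG0)
  have h2 := (hasDerivAt_id p).mul h1
  have : F1 m k = fun q => q * G m k q ^ ((k : ℝ) / 2) := rfl
  rw [this]
  refine h2.congr_deriv ?_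
  unfold D1
  simp only [id_eq]
  have hk0 : (k : ℝ) ≠ 0 := (hK0 hk).ne'
  field_simp
  ring

lemma hasDerivAt_F2 (hm : 1 ≤ m) (hp : 0 < p) (hp1 : p ≤ 1) :
    HasDerivAt (F2 m k) (D2 m k p) p := by
  have hu : 1 ≤ Real.log (Real.exp 1 / p) := one_le_u hp hp1
  have hu0 : Real.log (Real.exp 1 / p) ≠ 0 := by linarith
  have hU : HasDerivAt (fun q : ℝ => Real.log (Real.exp 1 / q)) (-(1 / p)) p := by
    have H : HasDerivAt (fun q : ℝ => 1 - Real.log q) (-(1 / p)) p := by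
      have h1 := (Real.hasDerivAt_log hp.ne').const_sub (1:ℝ)
      refine h1.congr_deriv ?_
      rw [one_div]
    apply H.congr_of_eventuallyEq
    filter_upwards [Ioi_mem_nhds hp] with q hq
    exact u_eq hq
  have hsq := hU.sqrt hu0
  have hprod := (hasDerivAt_id p).mul hsq
  have hfin := hprod.mul_const (Real.log (Real.exp 1 * m) ^ (((k : ℝ) - 1) / 2))
  have : F2 m k = fun q => q * Real.sqrt (Real.log (Real.exp 1 / q)) *
      Real.log (Real.exp 1 * m) ^ (((k : ℝ) - 1) / 2) := rfl
  rw [this]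
  refine hfin.congr_deriv ?_
  unfold D2
  simp only [id_eq]
  have hsqrt0 : Real.sqrt (Real.log (Real.exp 1 / p)) ≠ 0 :=
    (Real.sqrt_pos.2 (by linarith)).ne'
  field_simp
  ring

end LamAux

namespace LamAux

variable {m k : ℕ} {p x y : ℝ}

lemma tendsto_exp_mul_rpow (b : ℝ) {r c : ℝ} (hr : 0 ≤ r) (hc : 1 ≤ c) :
    Tendsto (fun x : ℝ => Real.exp (-x) * (b + x / c) ^ r) atTop (𝓝 0) := by
  have hc0 : (0:ℝ) < c := lt_of_lt_of_le one_pos hc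
  have hlim : Tendsto (fun x : ℝ => (2:ℝ) ^ r * (x ^ r * Real.exp (-1 * x))) atTop (𝓝 0) := by
    have := (tendsto_rpow_mul_exp_neg_mul_atTop_nhds_zero r 1 one_pos).const_mul ((2:ℝ) ^ r)
    simpa using this
  apply squeeze_zero' ?_ ?_ hlim
  · filter_upwards [eventually_ge_atTop (max (|b| * c) 0)] with x hx
    have hx0 : 0 ≤ x := le_trans (le_max_right _ _) hx
    have hb : 0 ≤ b + x / c := by
      have h1 : |b| * c ≤ x := le_trans (le_max_left _ _) hx
      have h2 : |b| ≤ x / c := (le_div_iff₀ hc0).mpr h1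
      have h3 : -b ≤ |b| := neg_le_abs b
      linarith
    positivity
  · filter_upwards [eventually_ge_atTop (max (max (|b| * c) 0) |b|)] with x hx
    have hx0 : 0 ≤ x := le_trans ((le_max_right _ _).trans (le_max_left _ _)) hx
    have hb : 0 ≤ b + x / c := by
      have h1 : |b| * c ≤ x := ((le_max_left _ _).trans (le_max_left _ _)).trans hx
      have h2 : |b| ≤ x / c := (le_div_iff₀ hc0).mpr h1
      have h3 : -b ≤ |b| := neg_le_abs b
      linarith
    have hb2 : b + x / c ≤ 2 * x := by
      have h1 : b ≤ |b| := le_abs_self b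
      have h2 : |b| ≤ x := (le_max_right _ _).trans hx
      have h3 : x / c ≤ x := by
        rw [div_le_iff₀ hc0]
        nlinarith
      linarith
    have h4 : (b + x / c) ^ r ≤ (2 * x) ^ r := Real.rpow_le_rpow hb hb2 hr
    have h5 : ((2:ℝ) * x) ^ r = 2 ^ r * x ^ r := Real.mul_rpow (by norm_num) hx0
    have h6 : (0:ℝ) < Real.exp (-x) := Real.exp_pos _
    calc Real.exp (-x) * (b + x / c) ^ r ≤ Real.exp (-x) * (2 ^ r * x ^ r) := by
          rw [← h5]; exact mul_le_mul_of_nonneg_left h4 h6.le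
      _ = 2 ^ r * (x ^ r * Real.exp (-1 * x)) := by rw [neg_one_mul]; ring

lemma tendsto_F1_zero (hm : 1 ≤ m) (hk : 1 ≤ k) :
    Tendsto (F1 m k) (𝓝[>] (0:ℝ)) (𝓝 0) := by
  set b : ℝ := 1 + ((k : ℝ) - 1) * Real.log m / k with hb
  have hΦ : Tendsto (fun t : ℝ => Real.exp t * (b + (-t) / k) ^ ((k:ℝ)/2)) atBot (𝓝 0) := by
    have h1 := (tendsto_exp_mul_rpow b (by positivity : (0:ℝ) ≤ (k:ℝ)/2) (hK1 hk)).comp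
      tendsto_neg_atBot_atTop
    apply h1.congr
    intro t
    simp [Function.comp, neg_neg]
  have hlog : Tendsto Real.log (𝓝[>] (0:ℝ)) atBot := Real.tendsto_log_nhdsGT_zero
  have h2 := hΦ.comp hlog
  apply h2.congr'
  filter_upwards [self_mem_nhdsWithin] with q hq
  have hq0 : (0:ℝ) < q := hq
  have hGq : G m k q = b + (-(Real.log q)) / k := by
    rw [G_eq hm hk hq0, hb]
    field_simp
    ring
  simp only [Function.comp]
  rw [Real.exp_log hq0, ← hGq]
  rfl

lemma hasDerivAt_Lam (hm : 1 ≤ m) (hk : 1 ≤ k) (hp : 0 < p) (hp1 : p < 1) :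
    HasDerivAt (Lam m k) (D m k p) p := by
  have hM := hM0 hm
  rcases lt_trichotomy p (1 / (m:ℝ)) with h | h | h
  · rw [show D m k p = D1 m k p from if_pos h.le]
    apply (hasDerivAt_F1 hm hk hp h.le).congr_of_eventuallyEq
    filter_upwards [Ioo_mem_nhds hp h] with q hq
    exact Lam_eq_F1 hq.1 hq.2.le
  · subst h
    rw [show D m k (1/(m:ℝ)) = D1 m k (1/(m:ℝ)) from if_pos le_rfl]
    have hleft : HasDerivWithinAt (Lam m k) (D1 m k (1/(m:ℝ))) (Iic (1/(m:ℝ))) (1/(m:ℝ)) := by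
      apply ((hasDerivAt_F1 hm hk hp le_rfl).hasDerivWithinAt).congr_of_eventuallyEq
      · filter_upwards [nhdsWithin_le_nhds (Ioi_mem_nhds hp), self_mem_nhdsWithin] with q hq0 hqle
        exact Lam_eq_F1 hq0 hqle
      · exact Lam_eq_F1 hp le_rfl
    have hright : HasDerivWithinAt (Lam m k) (D1 m k (1/(m:ℝ))) (Ici (1/(m:ℝ))) (1/(m:ℝ)) := by
      rw [junction_D hm hk]
      apply ((hasDerivAt_F2 hm hp hp1.le).hasDerivWithinAt).congr_of_eventuallyEq
      · filter_upwards [self_mem_nhdsWithin] with q hq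
        rcases eq_or_lt_of_le (Set.mem_Ici.mp hq) with heq | hlt
        · rw [← heq, Lam_eq_F1 hp le_rfl, junction_F hm hk]
        · exact Lam_eq_F2 hlt (lt_trans hp hlt)
      · rw [Lam_eq_F1 hp le_rfl, junction_F hm hk]
    have := hleft.union hright
    rw [Iic_union_Ici] at this
    exact hasDerivWithinAt_univ.mp this
  · rw [show D m k p = D2 m k p from if_neg (not_le.mpr h)]
    apply (hasDerivAt_F2 hm hp hp1.le).congr_of_eventuallyEq
    filter_upwards [Ioi_mem_nhds h] with q hq
    exact Lam_eq_F2 hq (lt_trans (by positivity) hq)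

lemma continuousAt_F1 (hm : 1 ≤ m) (hk : 1 ≤ k) (hp : 0 < p) : ContinuousAt (F1 m k) p := by
  have hinner : ContinuousAt (fun q : ℝ => Real.exp k * (m : ℝ) ^ (k - 1) / q) p :=
    continuousAt_const.div continuousAt_id hp.ne'
  have hval : Real.exp (k:ℝ) * (m : ℝ) ^ (k - 1) / p ≠ 0 := by
    have := hM0 hm
    positivity
  have hG : ContinuousAt (G m k) p :=
    continuousAt_const.mul ((Real.continuousAt_log hval).comp hinner)
  have hrpow : ContinuousAt (fun q => G m k q ^ ((k:ℝ)/2)) p :=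
    (Real.continuousAt_rpow_const _ _ (Or.inr (by positivity))).comp hG
  exact continuousAt_id.mul hrpow

lemma continuousAt_F2 (hp : 0 < p) : ContinuousAt (F2 m k) p := by
  have hinner : ContinuousAt (fun q : ℝ => Real.exp 1 / q) p :=
    continuousAt_const.div continuousAt_id hp.ne'
  have hval : Real.exp 1 / p ≠ 0 := by positivity
  have hlog : ContinuousAt (fun q : ℝ => Real.log (Real.exp 1 / q)) p :=
    (Real.continuousAt_log hval).comp hinner
  exact (continuousAt_id.mul (Real.continuous_sqrt.continuousAt.comp hlog)).mul continuousAt_const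

end LamAux

namespace LamAux

variable {m k : ℕ} {p x y : ℝ}

lemma continuousOn_Lam (hm : 1 ≤ m) (hk : 1 ≤ k) :
    ContinuousOn (Lam m k) (Set.Icc 0 1) := by
  have hM := hM0 hm
  intro p hp
  rcases eq_or_lt_of_le hp.1 with h0 | h0
  · -- p = 0
    subst h0
    have hL0 : Lam m k 0 = 0 := by unfold Lam; rw [if_pos le_rfl]
    unfold ContinuousWithinAt
    rw [hL0]
    have hmono : 𝓝[Set.Icc (0:ℝ) 1] 0 ≤ 𝓝[Set.Iic 0 ∪ Set.Ioi 0] 0 := by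
      apply nhdsWithin_mono
      intro q _
      rcases le_or_gt q 0 with h | h
      · exact Or.inl h
      · exact Or.inr h
    apply Tendsto.mono_left ?_ hmono
    rw [nhdsWithin_union, tendsto_sup]
    constructor
    · apply tendsto_const_nhds.congr'
      filter_upwards [self_mem_nhdsWithin] with q hq
      unfold Lam
      rw [if_pos (show q ≤ 0 from hq)]
    · apply (tendsto_F1_zero hm hk).congr'
      filter_upwards [self_mem_nhdsWithin,
        nhdsWithin_le_nhds (Iio_mem_nhds (by positivity : (0:ℝ) < 1 / m))] with q hq0 hq1
      exact (Lam_eq_F1 hq0 hq1.le).symm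
  · rcases lt_or_eq_of_le hp.2 with h1 | h1
    · exact ((hasDerivAt_Lam hm hk h0 h1).continuousAt).continuousWithinAt
    · -- p = 1
      subst h1
      by_cases hcase : (1:ℝ) ≤ 1 / m
      · apply ((continuousAt_F1 hm hk one_pos).continuousWithinAt).congr_of_eventuallyEq
        · filter_upwards [self_mem_nhdsWithin,
            nhdsWithin_le_nhds (Ioi_mem_nhds one_pos)] with q hq hq0
          exact Lam_eq_F1 hq0 (le_trans hq.2 hcase)
        · exact Lam_eq_F1 one_pos hcase
      · push_neg at hcase
        apply ((continuousAt_F2 one_pos).continuousWithinAt).congr_of_eventuallyEq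
        · filter_upwards [nhdsWithin_le_nhds (Ioi_mem_nhds hcase)] with q hq
          exact Lam_eq_F2 hq (lt_trans (by positivity) hq)
        · exact Lam_eq_F2 hcase one_pos

lemma D_nonneg (hm : 1 ≤ m) (hk : 1 ≤ k) (hp : p ∈ Set.Ioo (0:ℝ) 1) :
    0 ≤ D m k p := by
  unfold D
  split_ifs with h
  · exact psi_nonneg (hK1 hk) (one_le_G hm hk hp.1 h)
  · apply mul_nonneg (Real.rpow_nonneg (by linarith [one_le_L hm]) _)
    exact chi_nonneg (one_le_u hp.1 hp.2.le)

lemma D_antitone (hm : 1 ≤ m) (hk : 1 ≤ k) : AntitoneOn (D m k) (Set.Ioo 0 1) := by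
  intro x hx y hy hxy
  have hM := hM0 hm
  have hL1 : 1 ≤ Real.log (Real.exp 1 * m) := one_le_L hm
  have hL0 : (0:ℝ) < Real.log (Real.exp 1 * m) := lt_of_lt_of_le one_pos hL1
  by_cases hy1 : y ≤ 1 / (m:ℝ)
  · -- both in first branch
    have hx1 : x ≤ 1 / (m:ℝ) := le_trans hxy hy1
    rw [show D m k x = D1 m k x from if_pos hx1, show D m k y = D1 m k y from if_pos hy1]
    unfold D1
    exact psi_mono hk (one_le_G hm hk hy.1 hy1) (G_antitone hm hk hx.1 hxy)
  · push_neg at hy1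
    have h1uy : 1 ≤ Real.log (Real.exp 1 / y) := one_le_u hy.1 hy.2.le
    by_cases hx1 : x ≤ 1 / (m:ℝ)
    · -- cross case
      rw [show D m k x = D1 m k x from if_pos hx1,
        show D m k y = D2 m k y from if_neg (not_le.mpr hy1)]
      have step1 : D2 m k y ≤ Real.log (Real.exp 1 * m) ^ (((k:ℝ) - 1) / 2) *
          (Real.sqrt (Real.log (Real.exp 1 * m)) -
            1 / (2 * Real.sqrt (Real.log (Real.exp 1 * m)))) := by
        unfold D2
        apply mul_le_mul_of_nonneg_left
          (chi_mono h1uy (u_le_L hm hy1.le)) (Real.rpow_nonneg hL0.le _)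
      have step2 : Real.log (Real.exp 1 * m) ^ (((k:ℝ) - 1) / 2) *
          (Real.sqrt (Real.log (Real.exp 1 * m)) -
            1 / (2 * Real.sqrt (Real.log (Real.exp 1 * m)))) ≤ D1 m k x := by
        rw [psi_chi hL0]
        unfold D1
        exact psi_mono hk hL1 (L_le_G hm hk hx.1 hx1)
      exact le_trans step1 step2
    · -- both in second branch
      push_neg at hx1
      rw [show D m k x = D2 m k x from if_neg (not_le.mpr hx1),
        show D m k y = D2 m k y from if_neg (not_le.mpr hy1)]
      unfold D2
      exact mul_le_mul_of_nonneg_left (chi_mono h1uy (u_antitone hx.1 hxy))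
        (Real.rpow_nonneg hL0.le _)

end LamAux

open LamAux

theorem Lam_cont_monotone_concave (m k : ℕ) (hm : 1 ≤ m) (hk : 1 ≤ k) :
    ContinuousOn (Lam m k) (Set.Icc 0 1) ∧ MonotoneOn (Lam m k) (Set.Icc 0 1) ∧
      ConcaveOn ℝ (Set.Icc 0 1) (Lam m k) := by
  have hcont := continuousOn_Lam hm hk
  have hint : interior (Set.Icc (0:ℝ) 1) = Set.Ioo 0 1 := interior_Icc
  have hdiff : DifferentiableOn ℝ (Lam m k) (interior (Set.Icc (0:ℝ) 1)) := by
    rw [hint]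
    intro p hp
    exact (hasDerivAt_Lam hm hk hp.1 hp.2).differentiableAt.differentiableWithinAt
  have hderiv : ∀ p ∈ Set.Ioo (0:ℝ) 1, deriv (Lam m k) p = D m k p := fun p hp =>
    (hasDerivAt_Lam hm hk hp.1 hp.2).deriv
  refine ⟨hcont, ?_, ?_⟩
  · apply monotoneOn_of_deriv_nonneg (convex_Icc 0 1) hcont hdiff
    intro p hp
    rw [hint] at hp
    rw [hderiv p hp]
    exact D_nonneg hm hk hp
  · apply AntitoneOn.concaveOn_of_deriv (convex_Icc 0 1) hcont hdiff
    rw [hint]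
    intro x hx y hy hxy
    rw [hderiv x hx, hderiv y hy]
    exact D_antitone hm hk hx hy hxy
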